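/- Let γ = (γ₁,γ₂) : ℝ → ℝ² be a continuously differentiable 2π-periodic curve, μ : ℝ → ℝ a continuous 2π-periodic density, n(θ) = (γ₂'(θ), -γ₁'(θ)) the (unnormalized) normal, and let 0 < δ₁ < δ₂. Then for every x ∈ ℝ², the near-history double layer heat potential satisfies ∫_{δ₁}^{δ₂} ∫_0^{2π} ((x-γ(θ))·n(θ)/(2t)) · exp(-‖x-γ(θ)‖²/(4t))/(4πt) · μ(θ) dθ dt = (2π)^{-2} ∫_{ℝ²} ((exp(-‖k‖²δ₁) - exp(-‖k‖²δ₂))/‖k‖²) · exp(i k·x) · (-i)·(k₁ m̂₁(k) + k₂ m̂₂(k)) dk, where m̂_j(k) = ∫_0^{2π} exp(-i k·γ(θ)) μ(θ) n_j(θ) dθ for j = 1,2. -/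

import Mathlib

open MeasureTheory

/-- The point `(a, b)` of the Euclidean plane. -/
noncomputable def planePt (a b : ℝ) : EuclideanSpace ℝ (Fin 2) :=
  (WithLp.equiv 2 (Fin 2 → ℝ)).symm ![a, b]

section Auxiliary

open Complex
open scoped Real

local notation "E2" => EuclideanSpace ℝ (Fin 2)

lemma gauss1d_int {b : ℂ} (hb : b.re < 0) (c : ℂ) :
    Integrable (fun x : ℝ => Complex.exp (b * x ^ 2 + c * x)) := by
  simpa using integrable_cexp_quadratic' hb c 0

lemma gauss1d_val {b : ℂ} (hb : b.re < 0) (c : ℂ) :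
    ∫ x : ℝ, Complex.exp (b * x ^ 2 + c * x)
      = (↑π / -b) ^ (1/2 : ℂ) * Complex.exp (-(c ^ 2) / (4 * b)) := by
  simpa [zero_sub, neg_div] using integral_cexp_quadratic hb c 0

lemma rexp_quad_int {a D : ℝ} (ha : 0 < a) :
    Integrable (fun x : ℝ => Real.exp (-a * x ^ 2 + D * x)) := by
  have h := (integrable_cexp_quadratic (b := (a : ℂ)) (by simpa using ha) (D : ℂ) 0).norm
  convert h using 2 with x
  rw [Complex.norm_exp]
  congr 1
  simp [Complex.add_re, Complex.mul_re, ← Complex.ofReal_pow]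

lemma key1 {b : ℂ} (hb : b.re < 0) (c : ℂ) :
    Integrable (fun x : ℝ => (x : ℂ) * Complex.exp (b * x ^ 2 + c * x)) ∧
      ∫ x : ℝ, (x : ℂ) * Complex.exp (b * x ^ 2 + c * x)
        = (↑π / -b) ^ (1/2 : ℂ) * Complex.exp (-(c ^ 2) / (4 * b)) * (-c / (2 * b)) := by
  have hbne : b ≠ 0 := fun h => by simp [h] at hb
  set D : ℝ := ‖c‖ + 2 with hD
  have hD1 : 0 < D := by positivity
  set bound : ℝ → ℝ := fun x => Real.exp (b.re * x ^ 2 + D * |x|) with hbound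
  have hbound_int : Integrable bound := by
    have h1 := rexp_quad_int (a := -b.re) (D := D) (by linarith)
    have h2 := rexp_quad_int (a := -b.re) (D := -D) (by linarith)
    apply (h1.add h2).mono'
    · exact (Continuous.rexp (by continuity)).aestronglyMeasurable
    · filter_upwards with x
      have key : Real.exp (b.re * x ^ 2 + D * |x|) ≤
          Real.exp (- -b.re * x ^ 2 + D * x) + Real.exp (- -b.re * x ^ 2 + -D * x) := by
        rw [neg_neg]
        rcases le_total 0 x with h | h
        · rw [_root_.abs_of_nonneg h]
          nlinarith [(Real.exp_pos (b.re * x ^ 2 + -D * x)).le]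
        · rw [abs_of_nonpos h]
          have h2 : b.re * x ^ 2 + D * -x = b.re * x ^ 2 + -D * x := by ring
          rw [h2]
          nlinarith [(Real.exp_pos (b.re * x ^ 2 + D * x)).le]
      calc ‖bound x‖ = Real.exp (b.re * x ^ 2 + D * |x|) := by
            rw [Real.norm_eq_abs, _root_.abs_of_nonneg (Real.exp_pos _).le]
        _ ≤ _ := key
  have hmeas : ∀ y : ℂ, AEStronglyMeasurable (fun x : ℝ => Complex.exp (b * x ^ 2 + y * x)) volume := by
    intro y
    exact (Continuous.cexp (by continuity)).aestronglyMeasurable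
  have h := hasDerivAt_integral_of_dominated_loc_of_deriv_le (μ := volume) (𝕜 := ℂ)
      (F := fun y (x : ℝ) => Complex.exp (b * x ^ 2 + y * x))
      (F' := fun y (x : ℝ) => (x : ℂ) * Complex.exp (b * x ^ 2 + y * x))
      (x₀ := c) (bound := bound) (s := Metric.ball c 1) (Metric.ball_mem_nhds c one_pos)
      (Filter.Eventually.of_forall hmeas)
      (gauss1d_int hb c)
      ((Continuous.mul Complex.continuous_ofReal (Continuous.cexp (by continuity))).aestronglyMeasurable)
      ?_ hbound_int ?_
  · obtain ⟨hint, hder⟩ := h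
    refine ⟨hint, ?_⟩
    have heq : (fun y : ℂ => ∫ x : ℝ, Complex.exp (b * x ^ 2 + y * x))
        = fun y => (↑π / -b) ^ (1/2 : ℂ) * Complex.exp (-(y ^ 2) / (4 * b)) :=
      funext fun y => gauss1d_val hb y
    rw [heq] at hder
    have h3 : HasDerivAt (fun y : ℂ => -(y ^ 2) / (4 * b)) (-(2 * c) / (4 * b)) c := by
      simpa using (hasDerivAt_pow 2 c).neg.div_const (4 * b)
    have hder2 : HasDerivAt (fun y : ℂ => (↑π / -b) ^ (1/2 : ℂ) * Complex.exp (-(y ^ 2) / (4 * b)))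
        ((↑π / -b) ^ (1/2 : ℂ) * Complex.exp (-(c ^ 2) / (4 * b)) * (-c / (2 * b))) c := by
      have := (h3.cexp).const_mul ((↑π / -b) ^ (1/2 : ℂ))
      refine this.congr_deriv ?_
      field_simp
      ring
    exact hder.unique hder2
  · filter_upwards with x
    intro y hy
    have hyn : ‖y‖ ≤ ‖c‖ + 1 := by
      have := mem_ball_iff_norm.mp hy
      calc ‖y‖ = ‖c + (y - c)‖ := by ring_nf
        _ ≤ ‖c‖ + ‖y - c‖ := norm_add_le _ _
        _ ≤ ‖c‖ + 1 := by
            have : ‖y - c‖ ≤ 1 := this.le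
            linarith
    rw [norm_mul, Complex.norm_exp]
    have hre : (b * (x:ℂ) ^ 2 + y * x).re = b.re * x ^ 2 + y.re * x := by
      simp [Complex.add_re, Complex.mul_re, ← Complex.ofReal_pow]
    rw [hre]
    have h1 : ‖(x : ℂ)‖ = |x| := by simp
    rw [h1]
    have h2 : |x| ≤ Real.exp |x| := (Real.add_one_le_exp |x|).trans' (by linarith [abs_nonneg x])
    have h3 : y.re * x ≤ (‖c‖ + 1) * |x| := by
      have : |y.re * x| ≤ (‖c‖+1) * |x| := by
        rw [abs_mul]
        have : |y.re| ≤ ‖y‖ := Complex.abs_re_le_norm y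
        nlinarith [abs_nonneg x]
      linarith [le_abs_self (y.re * x)]
    calc |x| * Real.exp (b.re * x ^ 2 + y.re * x)
        ≤ Real.exp |x| * Real.exp (b.re * x ^ 2 + (‖c‖+1) * |x|) := by
          apply mul_le_mul h2 (Real.exp_le_exp.mpr (by linarith)) (Real.exp_pos _).le (Real.exp_pos _).le
      _ = bound x := by
          rw [← Real.exp_add, hbound]
          congr 1
          rw [hD]
          ring
  · filter_upwards with x
    intro y hy
    have h0 : HasDerivAt (fun y : ℂ => b * (x:ℂ) ^ 2 + y * x) ((x : ℂ)) y := by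
      simpa using ((hasDerivAt_id y).mul_const ((x:ℂ))).const_add (b * (x:ℂ) ^ 2)
    simpa [mul_comm] using h0.cexp

lemma inner_E2 (v w : E2) : (inner ℝ v w : ℝ) = v 0 * w 0 + v 1 * w 1 := by
  simp [PiLp.inner_apply, RCLike.inner_apply, Fin.sum_univ_two]
  ring

lemma norm_E2 (w : E2) : ‖w‖ ^ 2 = w 0 ^ 2 + w 1 ^ 2 := by
  rw [EuclideanSpace.norm_eq, Real.sq_sqrt (by positivity)]
  simp [Fin.sum_univ_two, sq_abs]

lemma integral_E2 (f : E2 → ℂ) :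
    ∫ k : E2, f k = ∫ q : ℝ × ℝ,
      f ((MeasurableEquiv.toLp 2 (Fin 2 → ℝ))
        ((MeasurableEquiv.piFinTwo (fun _ => ℝ)).symm q)) := by
  rw [← ((EuclideanSpace.volume_preserving_symm_measurableEquiv_toLp (Fin 2)).symm).integral_comp
      (MeasurableEquiv.measurableEmbedding _) f]
  rw [← ((volume_preserving_piFinTwo (fun _ => ℝ)).symm).integral_comp
      (MeasurableEquiv.measurableEmbedding _)]
  rfl

lemma coordE2_fst (q : ℝ × ℝ) :
    ((MeasurableEquiv.toLp 2 (Fin 2 → ℝ))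
        ((MeasurableEquiv.piFinTwo (fun _ => ℝ)).symm q)) 0 = q.1 := by
  simp [MeasurableEquiv.piFinTwo]

lemma coordE2_snd (q : ℝ × ℝ) :
    ((MeasurableEquiv.toLp 2 (Fin 2 → ℝ))
        ((MeasurableEquiv.piFinTwo (fun _ => ℝ)).symm q)) 1 = q.2 := by
  simp [MeasurableEquiv.piFinTwo]

lemma gauss2d {t : ℝ} (ht : 0 < t) (n w : E2) :
    ∫ k : E2, ((inner ℝ n k : ℝ) : ℂ) *
        Complex.exp (-(t:ℂ) * ((‖k‖^2 : ℝ) : ℂ) + Complex.I * ((inner ℝ k w : ℝ) : ℂ))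
      = ((π / t : ℝ) : ℂ) * Complex.exp (((-‖w‖^2 / (4*t) : ℝ)) : ℂ) *
          (Complex.I * ((inner ℝ n w : ℝ) : ℂ) / (2*t)) := by
  have htne : (t : ℝ) ≠ 0 := ht.ne'
  set b' : ℂ := -(t:ℂ) with hb'def
  have hb' : b'.re < 0 := by simp [hb'def]; exact ht
  set A : ℝ → ℂ := fun a => b' * a ^ 2 + (Complex.I * (w 0 : ℝ)) * a with hA
  set B : ℝ → ℂ := fun a => b' * a ^ 2 + (Complex.I * (w 1 : ℝ)) * a with hB
  rw [integral_E2]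
  have hfun : (fun q : ℝ × ℝ =>
      ((inner ℝ n ((MeasurableEquiv.toLp 2 (Fin 2 → ℝ))
          ((MeasurableEquiv.piFinTwo (fun _ => ℝ)).symm q)) : ℝ) : ℂ) *
        Complex.exp (-(t:ℂ) * ((‖(MeasurableEquiv.toLp 2 (Fin 2 → ℝ))
          ((MeasurableEquiv.piFinTwo (fun _ => ℝ)).symm q)‖^2 : ℝ) : ℂ)
          + Complex.I * ((inner ℝ ((MeasurableEquiv.toLp 2 (Fin 2 → ℝ))
          ((MeasurableEquiv.piFinTwo (fun _ => ℝ)).symm q)) w : ℝ) : ℂ)))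
      = fun q : ℝ × ℝ =>
        (((n 0 : ℝ) : ℂ) * ((q.1 : ℂ) * Complex.exp (A q.1))) * Complex.exp (B q.2)
        + Complex.exp (A q.1) * (((n 1 : ℝ) : ℂ) * ((q.2 : ℂ) * Complex.exp (B q.2))) := by
    funext q
    rw [inner_E2, inner_E2, norm_E2]
    simp only [coordE2_fst, coordE2_snd]
    have harg : (-(t:ℂ) * ((q.1 ^ 2 + q.2 ^ 2 : ℝ) : ℂ)
        + Complex.I * ((q.1 * w 0 + q.2 * w 1 : ℝ) : ℂ)) = A q.1 + B q.2 := by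
      rw [hA, hB, hb'def]
      push_cast
      ring
    rw [harg, Complex.exp_add]
    push_cast
    ring
  rw [hfun, MeasureTheory.Measure.volume_eq_prod]
  have int1 : Integrable (fun q : ℝ × ℝ =>
      (((n 0 : ℝ) : ℂ) * ((q.1 : ℂ) * Complex.exp (A q.1))) * Complex.exp (B q.2))
      (volume.prod volume) := ((key1 hb' _).1.const_mul _).mul_prod (gauss1d_int hb' _)
  have int2 : Integrable (fun q : ℝ × ℝ =>
      Complex.exp (A q.1) * (((n 1 : ℝ) : ℂ) * ((q.2 : ℂ) * Complex.exp (B q.2))))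
      (volume.prod volume) := (gauss1d_int hb' _).mul_prod ((key1 hb' _).1.const_mul _)
  rw [integral_add int1 int2,
    integral_prod_mul (f := fun a : ℝ => (((n 0 : ℝ) : ℂ) * ((a : ℂ) * Complex.exp (A a))))
      (g := fun b : ℝ => Complex.exp (B b)),
    integral_prod_mul (f := fun a : ℝ => Complex.exp (A a))
      (g := fun b : ℝ => (((n 1 : ℝ) : ℂ) * ((b : ℂ) * Complex.exp (B b)))),
    integral_const_mul, integral_const_mul, hA, hB, (key1 hb' _).2, (key1 hb' _).2,
    gauss1d_val hb', gauss1d_val hb']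
  set S : ℂ := (↑π / -b') ^ (1/2 : ℂ) with hSdef
  have hne : (↑π / -b' : ℂ) ≠ 0 := by
    rw [hb'def, neg_neg]
    apply div_ne_zero
    · exact_mod_cast Real.pi_ne_zero
    · exact_mod_cast htne
  have hS : S * S = ((π / t : ℝ) : ℂ) := by
    have h12 : (1/2 : ℂ) + 1/2 = 1 := by norm_num
    rw [hSdef, ← Complex.cpow_add _ _ hne, h12, Complex.cpow_one, hb'def, neg_neg,
      Complex.ofReal_div]
  have hC0 : -((Complex.I * ((w 0 : ℝ) : ℂ)) ^ 2) / (4 * b') = ((-(w 0)^2 / (4*t) : ℝ) : ℂ) := by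
    rw [hb'def]
    have h4 : (4 : ℂ) * -(t:ℂ) ≠ 0 := by
      simp only [ne_eq, mul_eq_zero, neg_eq_zero]
      push_neg
      exact ⟨by norm_num, by exact_mod_cast htne⟩
    field_simp [mul_pow, Complex.I_sq]
    push_cast
    linear_combination (((w 0 : ℝ) : ℂ) ^ 2 * ((t : ℂ))⁻¹) * Complex.I_sq
  have hC1 : -((Complex.I * ((w 1 : ℝ) : ℂ)) ^ 2) / (4 * b') = ((-(w 1)^2 / (4*t) : ℝ) : ℂ) := by
    rw [hb'def]
    have h4 : (4 : ℂ) * -(t:ℂ) ≠ 0 := by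
      simp only [ne_eq, mul_eq_zero, neg_eq_zero]
      push_neg
      exact ⟨by norm_num, by exact_mod_cast htne⟩
    field_simp [mul_pow, Complex.I_sq]
    push_cast
    linear_combination (((w 1 : ℝ) : ℂ) ^ 2 * ((t : ℂ))⁻¹) * Complex.I_sq
  have hD0 : -(Complex.I * ((w 0 : ℝ) : ℂ)) / (2 * b') = Complex.I * ((w 0 : ℝ) : ℂ) / (2 * t) := by
    rw [hb'def, mul_neg, div_neg, neg_div, neg_neg]
  have hD1 : -(Complex.I * ((w 1 : ℝ) : ℂ)) / (2 * b') = Complex.I * ((w 1 : ℝ) : ℂ) / (2 * t) := by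
    rw [hb'def, mul_neg, div_neg, neg_div, neg_neg]
  rw [hC0, hC1, hD0, hD1, ← hS]
  have hw : ((-‖w‖^2 / (4*t) : ℝ) : ℂ)
      = ((-(w 0)^2 / (4*t) : ℝ) : ℂ) + ((-(w 1)^2 / (4*t) : ℝ) : ℂ) := by
    rw [norm_E2]
    push_cast
    ring
  rw [hw, Complex.exp_add, inner_E2]
  push_cast
  ring

lemma exp_decay_integral {c : ℝ} (hc : c ≠ 0) (a b : ℝ) :
    ∫ t in a..b, Real.exp (-(c*t)) = (Real.exp (-(c*a)) - Real.exp (-(c*b)))/c := by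
  have hder : ∀ t ∈ Set.uIcc a b,
      HasDerivAt (fun t => -(1/c) * Real.exp (-(c*t))) (Real.exp (-(c*t))) t := by
    intro t _
    have h1 : HasDerivAt (fun t : ℝ => -(c*t)) (-c) t := by
      simpa [id_eq, neg_mul, mul_one] using (hasDerivAt_id t).const_mul (-c)
    have := (h1.exp).const_mul (-(1/c))
    refine this.congr_deriv ?_
    field_simp
  rw [intervalIntegral.integral_eq_sub_of_hasDerivAt hder
    (Continuous.intervalIntegrable (by continuity) a b)]
  field_simp
  ring

lemma planePt_apply0 (a b : ℝ) : planePt a b 0 = a := rfl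

lemma planePt_apply1 (a b : ℝ) : planePt a b 1 = b := rfl

lemma planePt_continuous {f₁ f₂ : ℝ → ℝ} (h₁ : Continuous f₁) (h₂ : Continuous f₂) :
    Continuous fun θ => planePt (f₁ θ) (f₂ θ) := by
  apply Continuous.comp (PiLp.continuous_toLp 2 (fun _ : Fin 2 => ℝ))
  apply continuous_pi
  intro i
  fin_cases i
  · simpa using h₁
  · simpa using h₂

lemma norm_exp_bound {a : ℝ} (ha : 0 < a) (s : ℝ) (hs : 0 ≤ s) :
    s * Real.exp (-a * s^2) ≤ Real.sqrt (2/a) * Real.exp (-(a/2) * s^2) := by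
  set c := Real.sqrt (2/a) with hc
  have hc0 : 0 < c := Real.sqrt_pos.mpr (by positivity)
  have hc2 : c^2 = 2/a := Real.sq_sqrt (by positivity)
  have ha2 : a * c^2 = 2 := by rw [hc2]; field_simp
  have hE := Real.add_one_le_exp ((a/2) * s^2)
  have hEpos : (0:ℝ) < Real.exp ((a/2) * s^2) := Real.exp_pos _
  have h1 : s ≤ c * Real.exp ((a/2)*s^2) := by
    have h2 : c * ((a/2) * s^2 + 1) ≤ c * Real.exp ((a/2)*s^2) :=
      mul_le_mul_of_nonneg_left hE hc0.le
    nlinarith [sq_nonneg (c - s)]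
  have h2 : Real.exp (-a*s^2) = Real.exp (-(a/2)*s^2) / Real.exp ((a/2)*s^2) := by
    rw [← Real.exp_sub]
    ring_nf
  rw [h2, mul_div_assoc', div_le_iff₀ hEpos]
  nlinarith [mul_nonneg (sub_nonneg.mpr h1) (Real.exp_pos (-(a/2)*s^2)).le]

lemma integrable_gauss_E2 {a : ℝ} (ha : 0 < a) :
    Integrable (fun k : E2 => Real.exp (-a * ‖k‖^2)) := by
  have h := (GaussianFourier.integrable_cexp_neg_mul_sq_norm_add (V := E2)
    (b := ((a : ℝ) : ℂ)) (by simpa using ha) 0 (0:E2)).norm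
  convert h using 2 with k
  rw [Complex.norm_exp]
  congr 1
  simp [Complex.add_re, Complex.mul_re, ← Complex.ofReal_pow]

lemma integrable_norm_gauss_E2 {a : ℝ} (ha : 0 < a) :
    Integrable (fun k : E2 => ‖k‖ * Real.exp (-a * ‖k‖^2)) := by
  apply Integrable.mono' ((integrable_gauss_E2 (half_pos ha)).const_mul (Real.sqrt (2/a)))
  · exact (continuous_norm.mul
      (Real.continuous_exp.comp (continuous_const.mul (continuous_norm.pow 2)))).aestronglyMeasurable
  · filter_upwards with k
    rw [Real.norm_eq_abs, _root_.abs_of_nonneg (by positivity)]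
    have := norm_exp_bound ha ‖k‖ (norm_nonneg k)
    convert this using 3 <;> ring

end Auxiliary

set_option maxHeartbeats 2000000
/-- Fourier representation of the near-history double layer heat potential for a
closed C¹ curve `γ = (γ₁, γ₂)` (2π-periodic) with unnormalized normal
`n(θ) = (γ₂'(θ), -γ₁'(θ))` and continuous 2π-periodic density `μ`. -/
theorem near_history_double_layer_fourier_rep
    (γ₁ γ₂ : ℝ → ℝ) (hγ₁ : ContDiff ℝ 1 γ₁) (hγ₂ : ContDiff ℝ 1 γ₂)
    (hγ₁per : Function.Periodic γ₁ (2 * Real.pi))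
    (hγ₂per : Function.Periodic γ₂ (2 * Real.pi))
    (μ : ℝ → ℝ) (hμ : Continuous μ) (hμper : Function.Periodic μ (2 * Real.pi))
    (δ₁ δ₂ : ℝ) (hδ₁ : 0 < δ₁) (hδ₁₂ : δ₁ < δ₂) (x : EuclideanSpace ℝ (Fin 2)) :
    ((∫ t in δ₁..δ₂, ∫ θ in (0:ℝ)..(2 * Real.pi),
        ((inner ℝ (x - planePt (γ₁ θ) (γ₂ θ)) (planePt (deriv γ₂ θ) (-(deriv γ₁ θ))) : ℝ)
            / (2 * t)) *
          (Real.exp (-‖x - planePt (γ₁ θ) (γ₂ θ)‖ ^ 2 / (4 * t)) / (4 * Real.pi * t)) *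
          μ θ : ℝ) : ℂ)
      = ((1 / (2 * Real.pi) ^ 2 : ℝ) : ℂ) *
        ∫ k : EuclideanSpace ℝ (Fin 2),
          (((Real.exp (-‖k‖ ^ 2 * δ₁) - Real.exp (-‖k‖ ^ 2 * δ₂)) / ‖k‖ ^ 2 : ℝ) : ℂ) *
          Complex.exp (Complex.I * ((inner ℝ k x : ℝ) : ℂ)) *
          ((-Complex.I) *
            (((k 0 : ℝ) : ℂ) *
              (∫ θ in (0:ℝ)..(2 * Real.pi),
                Complex.exp (-(Complex.I * ((inner ℝ k (planePt (γ₁ θ) (γ₂ θ)) : ℝ) : ℂ))) *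
                ((μ θ * deriv γ₂ θ : ℝ) : ℂ)) +
             ((k 1 : ℝ) : ℂ) *
              (∫ θ in (0:ℝ)..(2 * Real.pi),
                Complex.exp (-(Complex.I * ((inner ℝ k (planePt (γ₁ θ) (γ₂ θ)) : ℝ) : ℂ))) *
                ((μ θ * (-(deriv γ₁ θ)) : ℝ) : ℂ)))) := by
  classical
  have hπ : (0:ℝ) < 2 * Real.pi := by positivity
  set μT : Measure ℝ := volume.restrict (Set.Ioc δ₁ δ₂) with hμT
  set μΘ : Measure ℝ := volume.restrict (Set.Ioc 0 (2*Real.pi)) with hμΘ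
  haveI hfinT : IsFiniteMeasure μT := ⟨by rw [hμT, Measure.restrict_apply_univ]; exact measure_Ioc_lt_top⟩
  haveI hfinΘ : IsFiniteMeasure μΘ := ⟨by rw [hμΘ, Measure.restrict_apply_univ]; exact measure_Ioc_lt_top⟩
  set nn : ℝ → EuclideanSpace ℝ (Fin 2) := fun θ => planePt (deriv γ₂ θ) (-(deriv γ₁ θ)) with hnn
  set g : ℝ → EuclideanSpace ℝ (Fin 2) := fun θ => planePt (γ₁ θ) (γ₂ θ) with hg
  set H : EuclideanSpace ℝ (Fin 2) → ℝ → ℝ → ℂ := fun k t θ =>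
    ((μ θ : ℝ) : ℂ) * (-Complex.I) * (((inner ℝ (nn θ) k : ℝ) : ℂ) *
      Complex.exp (-(t:ℂ) * ((‖k‖^2 : ℝ) : ℂ)
        + Complex.I * ((inner ℝ k (x - g θ) : ℝ) : ℂ))) with hH
  -- continuity facts
  have hcd1 : Continuous (deriv γ₁) := hγ₁.continuous_deriv le_rfl
  have hcd2 : Continuous (deriv γ₂) := hγ₂.continuous_deriv le_rfl
  have hcontnn : Continuous nn := planePt_continuous hcd2 hcd1.neg
  have hcontg : Continuous g := planePt_continuous hγ₁.continuous hγ₂.continuous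
  have Hcont : Continuous fun q : EuclideanSpace ℝ (Fin 2) × ℝ × ℝ => H q.1 q.2.1 q.2.2 := by
    simp only [hH]
    apply Continuous.mul
    · exact (Complex.continuous_ofReal.comp (hμ.comp (continuous_snd.comp continuous_snd))).mul
        continuous_const
    · apply Continuous.mul
      · exact Complex.continuous_ofReal.comp
          ((hcontnn.comp (continuous_snd.comp continuous_snd)).inner continuous_fst)
      · apply Complex.continuous_exp.comp
        apply Continuous.add
        · exact ((Complex.continuous_ofReal.comp (continuous_fst.comp continuous_snd)).neg).mul
            (Complex.continuous_ofReal.comp ((continuous_norm.comp continuous_fst).pow 2))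
        · exact continuous_const.mul (Complex.continuous_ofReal.comp
            (continuous_fst.inner (continuous_const.sub
              (hcontg.comp (continuous_snd.comp continuous_snd)))))
  -- pointwise identity for the k-integrand
  have hG : ∀ k : EuclideanSpace ℝ (Fin 2),
      (((Real.exp (-‖k‖ ^ 2 * δ₁) - Real.exp (-‖k‖ ^ 2 * δ₂)) / ‖k‖ ^ 2 : ℝ) : ℂ) *
        Complex.exp (Complex.I * ((inner ℝ k x : ℝ) : ℂ)) *
        ((-Complex.I) *
          (((k 0 : ℝ) : ℂ) *
            (∫ θ in (0:ℝ)..(2 * Real.pi),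
              Complex.exp (-(Complex.I * ((inner ℝ k (planePt (γ₁ θ) (γ₂ θ)) : ℝ) : ℂ))) *
              ((μ θ * deriv γ₂ θ : ℝ) : ℂ)) +
           ((k 1 : ℝ) : ℂ) *
            (∫ θ in (0:ℝ)..(2 * Real.pi),
              Complex.exp (-(Complex.I * ((inner ℝ k (planePt (γ₁ θ) (γ₂ θ)) : ℝ) : ℂ))) *
              ((μ θ * (-(deriv γ₁ θ)) : ℝ) : ℂ))))
      = ∫ t in Set.Ioc δ₁ δ₂, ∫ θ in Set.Ioc 0 (2*Real.pi), H k t θ := by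
    intro k
    rcases eq_or_ne k 0 with hk | hk
    · subst hk
      simp [hH, inner_zero_right]
    · have hkn : ‖k‖ ≠ 0 := norm_ne_zero_iff.mpr hk
      have hc : (0:ℝ) < ‖k‖^2 := by positivity
      set P : ℝ → ℂ := fun θ =>
        Complex.exp (-(Complex.I * ((inner ℝ k (planePt (γ₁ θ) (γ₂ θ)) : ℝ) : ℂ))) *
          ((μ θ * deriv γ₂ θ : ℝ) : ℂ) with hP
      set Q : ℝ → ℂ := fun θ =>
        Complex.exp (-(Complex.I * ((inner ℝ k (planePt (γ₁ θ) (γ₂ θ)) : ℝ) : ℂ))) *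
          ((μ θ * (-(deriv γ₁ θ)) : ℝ) : ℂ) with hQ
      have hEcont : Continuous fun θ =>
          Complex.exp (-(Complex.I * ((inner ℝ k (planePt (γ₁ θ) (γ₂ θ)) : ℝ) : ℂ))) :=
        Complex.continuous_exp.comp ((continuous_const.mul (Complex.continuous_ofReal.comp
          (continuous_const.inner (planePt_continuous hγ₁.continuous hγ₂.continuous)))).neg)
      have hPc : Continuous P := by
        rw [hP]
        exact hEcont.mul (Complex.continuous_ofReal.comp (hμ.mul hcd2))
      have hQc : Continuous Q := by
        rw [hQ]
        exact hEcont.mul (Complex.continuous_ofReal.comp (hμ.mul hcd1.neg))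
      have intP : IntegrableOn P (Set.Ioc 0 (2*Real.pi)) volume :=
        (hPc.continuousOn.integrableOn_compact isCompact_Icc).mono_set Set.Ioc_subset_Icc_self
      have intQ : IntegrableOn Q (Set.Ioc 0 (2*Real.pi)) volume :=
        (hQc.continuousOn.integrableOn_compact isCompact_Icc).mono_set Set.Ioc_subset_Icc_self
      rw [intervalIntegral.integral_of_le hπ.le, intervalIntegral.integral_of_le hπ.le]
      have hcomb : ((k 0 : ℝ):ℂ) * (∫ θ in Set.Ioc 0 (2*Real.pi), P θ)
            + ((k 1 : ℝ):ℂ) * (∫ θ in Set.Ioc 0 (2*Real.pi), Q θ)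
          = ∫ θ in Set.Ioc 0 (2*Real.pi), (((k 0 : ℝ):ℂ) * P θ + ((k 1 : ℝ):ℂ) * Q θ) := by
        rw [← integral_const_mul, ← integral_const_mul,
          ← integral_add (intP.const_mul _) (intQ.const_mul _)]
      rw [hcomb]
      have ha : ((Real.exp (-‖k‖^2*δ₁) - Real.exp (-‖k‖^2*δ₂))/‖k‖^2 : ℝ)
          = ∫ t in Set.Ioc δ₁ δ₂, Real.exp (-(‖k‖^2 * t)) := by
        rw [← intervalIntegral.integral_of_le hδ₁₂.le, exp_decay_integral hc.ne', neg_mul, neg_mul]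
      rw [ha, mul_assoc]
      have h1 : ((∫ t in Set.Ioc δ₁ δ₂, Real.exp (-(‖k‖^2 * t)) : ℝ) : ℂ)
          = ∫ t in Set.Ioc δ₁ δ₂, ((Real.exp (-(‖k‖^2 * t)) : ℝ) : ℂ) := integral_ofReal.symm
      rw [h1, ← MeasureTheory.integral_mul_const]
      refine setIntegral_congr_fun measurableSet_Ioc fun t htt => ?_
      have h3 : ((Real.exp (-(‖k‖^2*t)) : ℝ):ℂ) *
            (Complex.exp (Complex.I * ((inner ℝ k x : ℝ):ℂ)) *
              ((-Complex.I) * ∫ θ in Set.Ioc 0 (2*Real.pi),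
                (((k 0 : ℝ):ℂ) * P θ + ((k 1 : ℝ):ℂ) * Q θ)))
          = (((Real.exp (-(‖k‖^2*t)) : ℝ):ℂ) * Complex.exp (Complex.I * ((inner ℝ k x : ℝ):ℂ))
              * (-Complex.I)) * ∫ θ in Set.Ioc 0 (2*Real.pi),
                (((k 0 : ℝ):ℂ) * P θ + ((k 1 : ℝ):ℂ) * Q θ) := by
        ring
      rw [h3, ← integral_const_mul]
      refine setIntegral_congr_fun measurableSet_Ioc fun θ _ => ?_
      simp only [hH, hP, hQ, hnn, hg]
      have hinner : (inner ℝ (planePt (deriv γ₂ θ) (-(deriv γ₁ θ))) k : ℝ)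
          = deriv γ₂ θ * k 0 + (-(deriv γ₁ θ)) * k 1 := by
        rw [inner_E2, planePt_apply0, planePt_apply1]
      have hsub : (inner ℝ k (x - planePt (γ₁ θ) (γ₂ θ)) : ℝ)
          = (inner ℝ k x : ℝ) - (inner ℝ k (planePt (γ₁ θ) (γ₂ θ)) : ℝ) := inner_sub_right _ _ _
      rw [hinner, hsub, Complex.ofReal_exp]
      have hexp : Complex.exp (-(t:ℂ) * ((‖k‖^2 : ℝ):ℂ)
            + Complex.I * (((inner ℝ k x : ℝ) - (inner ℝ k (planePt (γ₁ θ) (γ₂ θ)) : ℝ) : ℝ) : ℂ))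
          = Complex.exp (((-(‖k‖^2 * t) : ℝ)):ℂ) *
              Complex.exp (Complex.I * ((inner ℝ k x : ℝ):ℂ)) *
              Complex.exp (-(Complex.I * ((inner ℝ k (planePt (γ₁ θ) (γ₂ θ)) : ℝ):ℂ))) := by
        rw [← Complex.exp_add, ← Complex.exp_add]
        congr 1
        push_cast
        ring
      rw [hexp]
      push_cast
      ring
  -- integrability of slices in (t, θ)
  have hkslice : ∀ k : EuclideanSpace ℝ (Fin 2),
      Integrable (fun p : ℝ × ℝ => H k p.1 p.2) (μT.prod μΘ) := by
    intro k
    rw [hμT, hμΘ, Measure.prod_restrict, ← MeasureTheory.Measure.volume_eq_prod]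
    refine ((Continuous.continuousOn ?_).integrableOn_compact
      (isCompact_Icc.prod isCompact_Icc)).mono_set
      (Set.prod_mono Set.Ioc_subset_Icc_self Set.Ioc_subset_Icc_self)
    exact Hcont.comp (continuous_const.prodMk continuous_id)
  -- the big integrability on the triple product
  have bigInt : Integrable (fun q : EuclideanSpace ℝ (Fin 2) × ℝ × ℝ => H q.1 q.2.1 q.2.2)
      (volume.prod (μT.prod μΘ)) := by
    obtain ⟨Cμ', hCμ'⟩ := isCompact_Icc.exists_bound_of_continuousOn
      (s := Set.Icc 0 (2*Real.pi)) hμ.continuousOn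
    obtain ⟨Cn', hCn'⟩ := isCompact_Icc.exists_bound_of_continuousOn
      (s := Set.Icc 0 (2*Real.pi)) hcontnn.continuousOn
    have hCμ0 : 0 ≤ Cμ' := le_trans (norm_nonneg _) (hCμ' 0 ⟨le_refl 0, hπ.le⟩)
    have hCn0 : 0 ≤ Cn' := le_trans (norm_nonneg _) (hCn' 0 ⟨le_refl 0, hπ.le⟩)
    have hmS : MeasurableSet {q : EuclideanSpace ℝ (Fin 2) × ℝ × ℝ |
        q.2.1 ∈ Set.Ioc δ₁ δ₂ ∧ q.2.2 ∈ Set.Ioc 0 (2*Real.pi)} := by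
      exact ((measurableSet_Ioc : MeasurableSet (Set.Ioc δ₁ δ₂)).prod
        (measurableSet_Ioc : MeasurableSet (Set.Ioc 0 (2*Real.pi)))).preimage measurable_snd
    have hmem : ∀ᵐ q : EuclideanSpace ℝ (Fin 2) × ℝ × ℝ ∂(volume.prod (μT.prod μΘ)),
        q.2.1 ∈ Set.Ioc δ₁ δ₂ ∧ q.2.2 ∈ Set.Ioc 0 (2*Real.pi) := by
      rw [MeasureTheory.Measure.ae_prod_iff_ae_ae hmS]
      refine Filter.Eventually.of_forall fun k => ?_
      rw [hμT, hμΘ, Measure.prod_restrict]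
      filter_upwards [ae_restrict_mem (measurableSet_Ioc.prod measurableSet_Ioc)] with p hp
      exact ⟨hp.1, hp.2⟩
    refine Integrable.mono'
      (g := fun q : EuclideanSpace ℝ (Fin 2) × ℝ × ℝ =>
        (Cμ' * Cn') * (‖q.1‖ * Real.exp (-δ₁ * ‖q.1‖^2)))
      ?_ Hcont.aestronglyMeasurable ?_
    · have h := ((integrable_norm_gauss_E2 hδ₁).const_mul (Cμ' * Cn')).mul_prod
        (integrable_const (1:ℝ) (μ := μT.prod μΘ))
      simpa using h
    · filter_upwards [hmem] with q hq
      obtain ⟨hq1, hq2⟩ := hq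
      have hre : ((-(q.2.1:ℂ)) * ((‖q.1‖^2 : ℝ):ℂ)
          + Complex.I * ((inner ℝ q.1 (x - g q.2.2) : ℝ):ℂ)).re = -q.2.1 * ‖q.1‖^2 := by
        simp [Complex.add_re, Complex.mul_re, ← Complex.ofReal_pow]
      have hnorm : ‖H q.1 q.2.1 q.2.2‖
          = |μ q.2.2| * (|(inner ℝ (nn q.2.2) q.1 : ℝ)| * Real.exp (-q.2.1 * ‖q.1‖^2)) := by
        simp only [hH]
        rw [norm_mul, norm_mul, norm_mul, norm_neg, Complex.norm_I, mul_one,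
          Complex.norm_exp, hre]
        simp only [Complex.norm_real, Real.norm_eq_abs]
      rw [hnorm]
      have e1 : |μ q.2.2| ≤ Cμ' := by
        have := hCμ' q.2.2 (Set.Ioc_subset_Icc_self hq2)
        rwa [Real.norm_eq_abs] at this
      have e2 : |(inner ℝ (nn q.2.2) q.1 : ℝ)| ≤ Cn' * ‖q.1‖ := by
        have h1 : ‖(inner ℝ (nn q.2.2) q.1 : ℝ)‖ ≤ ‖nn q.2.2‖ * ‖q.1‖ := norm_inner_le_norm _ _
        have h2 : ‖nn q.2.2‖ ≤ Cn' := hCn' q.2.2 (Set.Ioc_subset_Icc_self hq2)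
        rw [Real.norm_eq_abs] at h1
        nlinarith [norm_nonneg q.1]
      have e3 : Real.exp (-q.2.1 * ‖q.1‖^2) ≤ Real.exp (-δ₁ * ‖q.1‖^2) := by
        apply Real.exp_le_exp.mpr
        have := hq1.1.le
        nlinarith [sq_nonneg ‖q.1‖]
      calc |μ q.2.2| * (|(inner ℝ (nn q.2.2) q.1 : ℝ)| * Real.exp (-q.2.1 * ‖q.1‖^2))
          ≤ Cμ' * ((Cn' * ‖q.1‖) * Real.exp (-δ₁ * ‖q.1‖^2)) := by
            have h5 := (Real.exp_pos (-q.2.1 * ‖q.1‖^2)).le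
            have h6 := (Real.exp_pos (-δ₁ * ‖q.1‖^2)).le
            have h7 := abs_nonneg (μ q.2.2)
            have h8 := abs_nonneg ((inner ℝ (nn q.2.2) q.1 : ℝ))
            have h9 : (0:ℝ) ≤ Cn' * ‖q.1‖ := mul_nonneg hCn0 (norm_nonneg _)
            have h10 : |(inner ℝ (nn q.2.2) q.1 : ℝ)| * Real.exp (-q.2.1 * ‖q.1‖^2)
                ≤ (Cn' * ‖q.1‖) * Real.exp (-δ₁ * ‖q.1‖^2) := mul_le_mul e2 e3 h5 h9
            exact mul_le_mul e1 h10 (mul_nonneg h8 h5) hCμ0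
        _ = (Cμ' * Cn') * (‖q.1‖ * Real.exp (-δ₁ * ‖q.1‖^2)) := by ring
  -- the final pointwise value of the k-integral
  have hval : ∀ t ∈ Set.Ioc δ₁ δ₂, ∀ θ : ℝ,
      ((1 / (2 * Real.pi) ^ 2 : ℝ) : ℂ) * ∫ k : EuclideanSpace ℝ (Fin 2), H k t θ
      = (((inner ℝ (x - planePt (γ₁ θ) (γ₂ θ)) (planePt (deriv γ₂ θ) (-(deriv γ₁ θ))) : ℝ)
            / (2 * t)) *
          (Real.exp (-‖x - planePt (γ₁ θ) (γ₂ θ)‖ ^ 2 / (4 * t)) / (4 * Real.pi * t)) *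
          μ θ : ℝ) := by
    intro t ht θ
    have ht' : (0:ℝ) < t := lt_trans hδ₁ ht.1
    simp only [hH]
    rw [integral_const_mul, gauss2d ht' (nn θ) (x - g θ)]
    simp only [hnn, hg]
    rw [real_inner_comm (x - planePt (γ₁ θ) (γ₂ θ)) (planePt (deriv γ₂ θ) (-(deriv γ₁ θ)))]
    have hred : ∀ (m P E W T : ℂ),
        m * -Complex.I * (P * E * (Complex.I * W / T)) = m * (P * E * (W / T)) := by
      intro m P E W T
      linear_combination (-(m * P * E * W / T)) * Complex.I_sq
    rw [hred]
    have hπne : (Real.pi : ℂ) ≠ 0 := Complex.ofReal_ne_zero.mpr Real.pi_ne_zero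
    have htne : ((t : ℝ) : ℂ) ≠ 0 := Complex.ofReal_ne_zero.mpr ht'.ne'
    push_cast [Complex.ofReal_exp]
    field_simp
    ring
  -- LHS as iterated set integrals of coercions
  have hL : ((∫ t in δ₁..δ₂, ∫ θ in (0:ℝ)..(2 * Real.pi),
        ((inner ℝ (x - planePt (γ₁ θ) (γ₂ θ)) (planePt (deriv γ₂ θ) (-(deriv γ₁ θ))) : ℝ)
            / (2 * t)) *
          (Real.exp (-‖x - planePt (γ₁ θ) (γ₂ θ)‖ ^ 2 / (4 * t)) / (4 * Real.pi * t)) *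
          μ θ : ℝ) : ℂ)
      = ∫ t in Set.Ioc δ₁ δ₂, ∫ θ in Set.Ioc 0 (2*Real.pi),
          ((((inner ℝ (x - planePt (γ₁ θ) (γ₂ θ)) (planePt (deriv γ₂ θ) (-(deriv γ₁ θ))) : ℝ)
            / (2 * t)) *
          (Real.exp (-‖x - planePt (γ₁ θ) (γ₂ θ)‖ ^ 2 / (4 * t)) / (4 * Real.pi * t)) *
          μ θ : ℝ) : ℂ) := by
    rw [intervalIntegral.integral_of_le hδ₁₂.le]
    refine Eq.trans integral_ofReal.symm ?_
    refine setIntegral_congr_fun measurableSet_Ioc fun t _ => ?_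
    rw [intervalIntegral.integral_of_le hπ.le]
    exact integral_ofReal.symm
  rw [hL]
  -- now transform the right-hand side
  calc ∫ t in Set.Ioc δ₁ δ₂, ∫ θ in Set.Ioc 0 (2*Real.pi),
          ((((inner ℝ (x - planePt (γ₁ θ) (γ₂ θ)) (planePt (deriv γ₂ θ) (-(deriv γ₁ θ))) : ℝ)
            / (2 * t)) *
          (Real.exp (-‖x - planePt (γ₁ θ) (γ₂ θ)‖ ^ 2 / (4 * t)) / (4 * Real.pi * t)) *
          μ θ : ℝ) : ℂ)
      = ∫ t in Set.Ioc δ₁ δ₂, ∫ θ in Set.Ioc 0 (2*Real.pi),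
          ((1 / (2 * Real.pi) ^ 2 : ℝ) : ℂ) * ∫ k : EuclideanSpace ℝ (Fin 2), H k t θ := by
        refine setIntegral_congr_fun measurableSet_Ioc fun t ht => ?_
        refine setIntegral_congr_fun measurableSet_Ioc fun θ _ => ?_
        exact (hval t ht θ).symm
    _ = ((1 / (2 * Real.pi) ^ 2 : ℝ) : ℂ) * ∫ t in Set.Ioc δ₁ δ₂, ∫ θ in Set.Ioc 0 (2*Real.pi),
          ∫ k : EuclideanSpace ℝ (Fin 2), H k t θ := by
        rw [← integral_const_mul]
        refine setIntegral_congr_fun measurableSet_Ioc fun t _ => ?_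
        rw [← integral_const_mul]
    _ = ((1 / (2 * Real.pi) ^ 2 : ℝ) : ℂ) * ∫ p : ℝ × ℝ,
          (∫ k : EuclideanSpace ℝ (Fin 2), H k p.1 p.2) ∂(μT.prod μΘ) := by
        congr 1
        exact (integral_prod _ bigInt.swap.integral_prod_left).symm
    _ = ((1 / (2 * Real.pi) ^ 2 : ℝ) : ℂ) * ∫ k : EuclideanSpace ℝ (Fin 2),
          ∫ p : ℝ × ℝ, H k p.1 p.2 ∂(μT.prod μΘ) := by
        congr 1
        exact (integral_integral_swap (f := fun k (p : ℝ × ℝ) => H k p.1 p.2) bigInt).symm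
    _ = ((1 / (2 * Real.pi) ^ 2 : ℝ) : ℂ) * ∫ k : EuclideanSpace ℝ (Fin 2),
          ∫ t in Set.Ioc δ₁ δ₂, ∫ θ in Set.Ioc 0 (2*Real.pi), H k t θ := by
        congr 1
        refine integral_congr_ae (Filter.Eventually.of_forall fun k => ?_)
        rw [hμT, hμΘ] at *
        exact integral_prod _ (hkslice k)
    _ = ((1 / (2 * Real.pi) ^ 2 : ℝ) : ℂ) *
        ∫ k : EuclideanSpace ℝ (Fin 2),
          (((Real.exp (-‖k‖ ^ 2 * δ₁) - Real.exp (-‖k‖ ^ 2 * δ₂)) / ‖k‖ ^ 2 : ℝ) : ℂ) *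
          Complex.exp (Complex.I * ((inner ℝ k x : ℝ) : ℂ)) *
          ((-Complex.I) *
            (((k 0 : ℝ) : ℂ) *
              (∫ θ in (0:ℝ)..(2 * Real.pi),
                Complex.exp (-(Complex.I * ((inner ℝ k (planePt (γ₁ θ) (γ₂ θ)) : ℝ) : ℂ))) *
                ((μ θ * deriv γ₂ θ : ℝ) : ℂ)) +
             ((k 1 : ℝ) : ℂ) *
              (∫ θ in (0:ℝ)..(2 * Real.pi),
                Complex.exp (-(Complex.I * ((inner ℝ k (planePt (γ₁ θ) (γ₂ θ)) : ℝ) : ℂ))) *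
                ((μ θ * (-(deriv γ₁ θ)) : ℝ) : ℂ)))) := by
        congr 1
        refine integral_congr_ae (Filter.Eventually.of_forall fun k => ?_)
        exact (hG k).symm
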